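/- Biclustering with L2 cost admits a 2-approximation by independent one-way clusterings: if R minimizes L_R and C minimizes L_C (as above) under L2 cost, then L = Σ_{R∈R} Σ_{C∈C} V(X(R,C)) ≤ 2·L*, where L* is the optimal biclustering cost. -/

import Mathlib

open Finset in
/-- L2 cost of the submatrix of `X` induced by rows `R` and columns `C`:
sum of squared deviations from the submatrix mean. -/
noncomputable def V2 {N M : ℕ} (X : Fin N → Fin M → ℝ)
    (R : Finset (Fin N)) (C : Finset (Fin M)) : ℝ :=
  ∑ i ∈ R, ∑ j ∈ C,
    (X i j - (∑ i' ∈ R, ∑ j' ∈ C, X i' j') / (R.card * C.card)) ^ 2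

open Finset

/-- Bias–variance style decomposition of sum of squared deviations. -/
lemma sum_sq_decomp {ι : Type*} (s : Finset ι) (f : ι → ℝ) (c : ℝ) (hs : s.Nonempty) :
    ∑ a ∈ s, (f a - c) ^ 2
      = ∑ a ∈ s, (f a - (∑ a ∈ s, f a) / s.card) ^ 2
        + s.card * ((∑ a ∈ s, f a) / s.card - c) ^ 2 := by
  have hn : (0:ℝ) < (s.card : ℝ) := by exact_mod_cast Finset.card_pos.2 hs
  set μ : ℝ := (∑ a ∈ s, f a) / s.card with hμ
  have hμs : ∑ a ∈ s, f a = s.card * μ := by rw [hμ, mul_div_cancel₀ _ hn.ne']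
  have h0 : ∑ a ∈ s, (f a - μ) = 0 := by
    rw [Finset.sum_sub_distrib, Finset.sum_const, nsmul_eq_mul, hμs]; ring
  have h1 : ∑ a ∈ s, ((f a - c)^2 - (f a - μ)^2) = s.card * (μ - c)^2 := by
    rw [Finset.sum_congr rfl (fun a _ => by ring :
        ∀ a ∈ s, (f a - c)^2 - (f a - μ)^2 = (f a - μ)*(2*(μ-c)) + (μ-c)^2),
      Finset.sum_add_distrib, ← Finset.sum_mul, h0, Finset.sum_const, nsmul_eq_mul]
    ring
  rw [Finset.sum_sub_distrib] at h1
  linarith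

/-- The mean minimizes the sum of squared deviations. -/
lemma mean_min {ι : Type*} (s : Finset ι) (f : ι → ℝ) (c : ℝ) :
    ∑ a ∈ s, (f a - (∑ a ∈ s, f a) / s.card) ^ 2 ≤ ∑ a ∈ s, (f a - c) ^ 2 := by
  rcases s.eq_empty_or_nonempty with rfl | hs
  · simp
  rw [sum_sq_decomp s f c hs]
  have hn : (0:ℝ) ≤ (s.card : ℝ) := by positivity
  nlinarith [sq_nonneg ((∑ a ∈ s, f a) / s.card - c)]

lemma V2_single_col {N M : ℕ} (X : Fin N → Fin M → ℝ) (R : Finset (Fin N)) (j : Fin M) :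
    V2 X R {j} = ∑ i ∈ R, (X i j - (∑ i' ∈ R, X i' j) / R.card) ^ 2 := by
  simp [V2]

lemma V2_single_row {N M : ℕ} (X : Fin N → Fin M → ℝ) (i : Fin N) (C : Finset (Fin M)) :
    V2 X {i} C = ∑ j ∈ C, (X i j - (∑ j' ∈ C, X i j') / C.card) ^ 2 := by
  simp [V2]

/-- Refinement of columns within a row block decreases cost. -/
lemma sum_V2_col_le {N M : ℕ} (X : Fin N → Fin M → ℝ) (R : Finset (Fin N))
    (C : Finset (Fin M)) : ∑ j ∈ C, V2 X R {j} ≤ V2 X R C := by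
  rw [V2, Finset.sum_comm]
  refine Finset.sum_le_sum fun j hj => ?_
  rw [V2_single_col]
  exact mean_min R (fun i => X i j) _

/-- Refinement of rows within a column block decreases cost. -/
lemma sum_V2_row_le {N M : ℕ} (X : Fin N → Fin M → ℝ) (R : Finset (Fin N))
    (C : Finset (Fin M)) : ∑ i ∈ R, V2 X {i} C ≤ V2 X R C := by
  rw [V2]
  refine Finset.sum_le_sum fun i hi => ?_
  rw [V2_single_row]
  exact mean_min C (fun j => X i j) _

/-- Key inequality: block cost is at most column cost plus row cost. -/
lemma V2_le_rows_add_cols {N M : ℕ} (X : Fin N → Fin M → ℝ) (R : Finset (Fin N))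
    (C : Finset (Fin M)) :
    V2 X R C ≤ ∑ j ∈ C, V2 X R {j} + ∑ i ∈ R, V2 X {i} C := by
  rcases R.eq_empty_or_nonempty with rfl | hR
  · simp [V2]
  rcases C.eq_empty_or_nonempty with rfl | hC
  · simp [V2]
  have hnr : (0:ℝ) < (R.card : ℝ) := by exact_mod_cast Finset.card_pos.2 hR
  have hnc : (0:ℝ) < (C.card : ℝ) := by exact_mod_cast Finset.card_pos.2 hC
  set m : ℝ := (∑ i ∈ R, ∑ j ∈ C, X i j) / (R.card * C.card) with hm
  set μ : Fin M → ℝ := fun j => (∑ i ∈ R, X i j) / R.card with hμ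
  set ν : Fin N → ℝ := fun i => (∑ j ∈ C, X i j) / C.card with hν
  have htot : ∑ i ∈ R, ∑ j ∈ C, X i j = R.card * C.card * m := by
    rw [hm]; field_simp
  have hνsum : ∑ i ∈ R, ν i = R.card * m := by
    rw [hν]
    rw [← Finset.sum_div]
    rw [htot]
    rw [div_eq_iff hnc.ne']
    ring
  -- step 2 : cross-block bias controlled by row costs
  have hstep2 : ∀ j ∈ C, (R.card : ℝ) * (μ j - m)^2 ≤ ∑ i ∈ R, (X i j - ν i)^2 := by
    intro j hj
    have hsum : ∑ i ∈ R, (X i j - ν i) = R.card * (μ j - m) := by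
      rw [Finset.sum_sub_distrib, hνsum, hμ]
      rw [mul_sub, mul_div_cancel₀ _ hnr.ne']
    have hcs := sq_sum_le_card_mul_sum_sq (s := R) (f := fun i => X i j - ν i)
    rw [hsum] at hcs
    nlinarith [Finset.sum_nonneg (fun i (_ : i ∈ R) => sq_nonneg (X i j - ν i))]
  have hdecomp : ∀ j ∈ C, ∑ i ∈ R, (X i j - m)^2
      = ∑ i ∈ R, (X i j - μ j)^2 + R.card * (μ j - m)^2 := by
    intro j hj
    exact sum_sq_decomp R (fun i => X i j) m hR
  have hV : V2 X R C = ∑ j ∈ C, ∑ i ∈ R, (X i j - m)^2 := by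
    rw [V2, Finset.sum_comm]
  calc V2 X R C = ∑ j ∈ C, (∑ i ∈ R, (X i j - μ j)^2 + R.card * (μ j - m)^2) := by
        rw [hV]; exact Finset.sum_congr rfl hdecomp
    _ ≤ ∑ j ∈ C, (∑ i ∈ R, (X i j - μ j)^2 + ∑ i ∈ R, (X i j - ν i)^2) := by
        refine Finset.sum_le_sum fun j hj => ?_
        linarith [hstep2 j hj]
    _ = ∑ j ∈ C, V2 X R {j} + ∑ i ∈ R, V2 X {i} C := by
        rw [Finset.sum_add_distrib, Finset.sum_comm (s := C) (t := R)
          (f := fun j i => (X i j - ν i)^2)]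
        congr 1
        · exact Finset.sum_congr rfl fun j _ => (V2_single_col X R j).symm
        · exact Finset.sum_congr rfl fun i _ => (V2_single_row X i C).symm

open Finset in
/-- Biclustering with L2 cost admits a 2-approximation by independent optimal one-way
row and column clusterings. -/
theorem l2_biclustering_two_approx (N M Kr Kc : ℕ) (X : Fin N → Fin M → ℝ)
    (ρ : Fin N → Fin Kr) (γ : Fin M → Fin Kc)
    (hρ : ∀ ρ' : Fin N → Fin Kr,
      ∑ k, ∑ j : Fin M, V2 X (Finset.univ.filter (fun i => ρ i = k)) {j} ≤
        ∑ k, ∑ j : Fin M, V2 X (Finset.univ.filter (fun i => ρ' i = k)) {j})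
    (hγ : ∀ γ' : Fin M → Fin Kc,
      ∑ i : Fin N, ∑ l, V2 X {i} (Finset.univ.filter (fun j => γ j = l)) ≤
        ∑ i : Fin N, ∑ l, V2 X {i} (Finset.univ.filter (fun j => γ' j = l)))
    (ρs : Fin N → Fin Kr) (γs : Fin M → Fin Kc) :
    ∑ k, ∑ l,
        V2 X (Finset.univ.filter (fun i => ρ i = k)) (Finset.univ.filter (fun j => γ j = l)) ≤
      2 * ∑ k, ∑ l,
        V2 X (Finset.univ.filter (fun i => ρs i = k))
          (Finset.univ.filter (fun j => γs j = l)) := by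
  set Rk : Fin Kr → Finset (Fin N) := fun k => Finset.univ.filter (fun i => ρ i = k) with hRk
  set Cl : Fin Kc → Finset (Fin M) := fun l => Finset.univ.filter (fun j => γ j = l) with hCl
  set Rsk : Fin Kr → Finset (Fin N) := fun k => Finset.univ.filter (fun i => ρs i = k) with hRsk
  set Csl : Fin Kc → Finset (Fin M) := fun l => Finset.univ.filter (fun j => γs j = l) with hCsl
  set Ls : ℝ := ∑ k, ∑ l, V2 X (Rsk k) (Csl l) with hLs
  -- Step 1: L ≤ L_R(ρ) + L_C(γ)
  have step1 : ∑ k, ∑ l, V2 X (Rk k) (Cl l)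
      ≤ (∑ k, ∑ j : Fin M, V2 X (Rk k) {j}) + (∑ i : Fin N, ∑ l, V2 X {i} (Cl l)) := by
    have h1 : ∑ k, ∑ l, V2 X (Rk k) (Cl l)
        ≤ ∑ k, ∑ l, (∑ j ∈ Cl l, V2 X (Rk k) {j} + ∑ i ∈ Rk k, V2 X {i} (Cl l)) := by
      refine Finset.sum_le_sum fun k _ => Finset.sum_le_sum fun l _ => ?_
      exact V2_le_rows_add_cols X (Rk k) (Cl l)
    have h2 : ∑ k, ∑ l, (∑ j ∈ Cl l, V2 X (Rk k) {j} + ∑ i ∈ Rk k, V2 X {i} (Cl l))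
        = (∑ k, ∑ j : Fin M, V2 X (Rk k) {j}) + (∑ i : Fin N, ∑ l, V2 X {i} (Cl l)) := by
      simp only [Finset.sum_add_distrib]
      congr 1
      · exact Finset.sum_congr rfl fun k _ =>
          Finset.sum_fiberwise Finset.univ γ (fun j => V2 X (Rk k) {j})
      · calc ∑ k, ∑ l, ∑ i ∈ Rk k, V2 X {i} (Cl l)
            = ∑ l, ∑ k, ∑ i ∈ Rk k, V2 X {i} (Cl l) := Finset.sum_comm
          _ = ∑ l, ∑ i : Fin N, V2 X {i} (Cl l) := Finset.sum_congr rfl fun l _ =>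
              Finset.sum_fiberwise Finset.univ ρ (fun i => V2 X {i} (Cl l))
          _ = ∑ i : Fin N, ∑ l, V2 X {i} (Cl l) := Finset.sum_comm
    linarith [h1, h2.le, h2.ge]
  -- Step 2: L_R(ρ) ≤ L_R(ρs) ≤ Ls
  have step2 : ∑ k, ∑ j : Fin M, V2 X (Rk k) {j} ≤ Ls := by
    refine le_trans (hρ ρs) ?_
    have : ∀ k, ∑ j : Fin M, V2 X (Rsk k) {j} = ∑ l, ∑ j ∈ Csl l, V2 X (Rsk k) {j} :=
      fun k => (Finset.sum_fiberwise Finset.univ γs (fun j => V2 X (Rsk k) {j})).symm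
    calc ∑ k, ∑ j : Fin M, V2 X (Rsk k) {j}
        = ∑ k, ∑ l, ∑ j ∈ Csl l, V2 X (Rsk k) {j} := Finset.sum_congr rfl fun k _ => this k
      _ ≤ Ls := Finset.sum_le_sum fun k _ => Finset.sum_le_sum fun l _ =>
          sum_V2_col_le X (Rsk k) (Csl l)
  -- Step 3: L_C(γ) ≤ L_C(γs) ≤ Ls
  have step3 : ∑ i : Fin N, ∑ l, V2 X {i} (Cl l) ≤ Ls := by
    refine le_trans (hγ γs) ?_
    calc ∑ i : Fin N, ∑ l, V2 X {i} (Csl l)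
        = ∑ l, ∑ i : Fin N, V2 X {i} (Csl l) := Finset.sum_comm
      _ = ∑ l, ∑ k, ∑ i ∈ Rsk k, V2 X {i} (Csl l) := Finset.sum_congr rfl fun l _ =>
          (Finset.sum_fiberwise Finset.univ ρs (fun i => V2 X {i} (Csl l))).symm
      _ = ∑ k, ∑ l, ∑ i ∈ Rsk k, V2 X {i} (Csl l) := Finset.sum_comm
      _ ≤ Ls := Finset.sum_le_sum fun k _ => Finset.sum_le_sum fun l _ =>
          sum_V2_row_le X (Rsk k) (Csl l)
  linarith
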